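/- Let X₀ and X₁ be almost discrete spaces with non-isolated points x₀ ∈ X₀ and x₁ ∈ X₁, and let Z be the quotient of the disjoint union X₀ ⊔ X₁ identifying x₀ and x₁ to a single point z. Then Z is almost discrete (z is its unique non-isolated point), and the product Z × Z contains a closed subspace homeomorphic to X₀ × X₁. -/
import Mathlib


open Topology

/-- Let `X₀`, `X₁` be almost discrete spaces with non-isolated points `x₀`, `x₁`,
and let `π : X₀ ⊕ X₁ → Z` be the quotient map identifying exactly `x₀` and `x₁`
to one point. Then `Z` is almost discrete with unique non-isolated point
`π (inl x₀)`, and `Z × Z` contains a closed subspace homeomorphic to `X₀ × X₁`. -/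
theorem wedge_almostDiscrete_and_closed_copy {X₀ X₁ Z : Type*}
    [TopologicalSpace X₀] [TopologicalSpace X₁] [TopologicalSpace Z]
    (x₀ : X₀) (x₁ : X₁)
    (hni₀ : ¬ IsOpen ({x₀} : Set X₀)) (hiso₀ : ∀ x : X₀, x ≠ x₀ → IsOpen ({x} : Set X₀))
    (hni₁ : ¬ IsOpen ({x₁} : Set X₁)) (hiso₁ : ∀ x : X₁, x ≠ x₁ → IsOpen ({x} : Set X₁))
    (π : X₀ ⊕ X₁ → Z) (hq : Topology.IsQuotientMap π)
    (hfib : ∀ a b : X₀ ⊕ X₁, π a = π b ↔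
      (a = b ∨ (a ∈ ({Sum.inl x₀, Sum.inr x₁} : Set (X₀ ⊕ X₁)) ∧
                b ∈ ({Sum.inl x₀, Sum.inr x₁} : Set (X₀ ⊕ X₁))))) :
    (¬ IsOpen ({π (Sum.inl x₀)} : Set Z) ∧
      ∀ z : Z, z ≠ π (Sum.inl x₀) → IsOpen ({z} : Set Z)) ∧
    ∃ e : X₀ × X₁ → Z × Z, Topology.IsClosedEmbedding e := by
  have fib_ll : ∀ a a' : X₀, π (Sum.inl a) = π (Sum.inl a') ↔ a = a' := by
    intro a a'
    rw [hfib]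
    constructor
    · rintro (h | ⟨h1, h2⟩)
      · exact Sum.inl.inj h
      · simp only [Set.mem_insert_iff, Set.mem_singleton_iff, Sum.inl.injEq,
          reduceCtorEq, or_false] at h1 h2
        rw [h1, h2]
    · rintro rfl; exact Or.inl rfl
  have fib_rr : ∀ b b' : X₁, π (Sum.inr b) = π (Sum.inr b') ↔ b = b' := by
    intro b b'
    rw [hfib]
    constructor
    · rintro (h | ⟨h1, h2⟩)
      · exact Sum.inr.inj h
      · simp only [Set.mem_insert_iff, Set.mem_singleton_iff, Sum.inr.injEq,
          reduceCtorEq, false_or] at h1 h2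
        rw [h1, h2]
    · rintro rfl; exact Or.inl rfl
  have key : π (Sum.inr x₁) = π (Sum.inl x₀) := by
    rw [hfib]; exact Or.inr ⟨Or.inr rfl, Or.inl rfl⟩
  have pre_z₀ : π ⁻¹' {π (Sum.inl x₀)} =
      ({Sum.inl x₀, Sum.inr x₁} : Set (X₀ ⊕ X₁)) := by
    ext c
    simp only [Set.mem_preimage, Set.mem_singleton_iff]
    rw [hfib]
    constructor
    · rintro (rfl | ⟨h, _⟩)
      · exact Or.inl rfl
      · exact h
    · intro h; exact Or.inr ⟨h, Or.inl rfl⟩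
  have h1 : ¬ IsOpen ({π (Sum.inl x₀)} : Set Z) := by
    intro h
    have ho := hq.isOpen_preimage.mpr h
    rw [pre_z₀, isOpen_sum_iff] at ho
    apply hni₀
    have : Sum.inl ⁻¹' ({Sum.inl x₀, Sum.inr x₁} : Set (X₀ ⊕ X₁)) = {x₀} := by
      ext a; simp
    rw [this] at ho
    exact ho.1
  have h2 : ∀ z : Z, z ≠ π (Sum.inl x₀) → IsOpen ({z} : Set Z) := by
    intro z hz
    obtain ⟨c, rfl⟩ := hq.surjective z
    have pre : π ⁻¹' {π c} = {c} := by
      ext d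
      simp only [Set.mem_preimage, Set.mem_singleton_iff]
      rw [hfib]
      constructor
      · rintro (rfl | ⟨hd, hc⟩)
        · rfl
        · exfalso; apply hz
          rcases hc with rfl | rfl
          · rfl
          · exact key
      · rintro rfl; exact Or.inl rfl
    rw [← hq.isOpen_preimage, pre]
    rcases c with a | b
    · have ha : a ≠ x₀ := by rintro rfl; exact hz rfl
      rw [isOpen_sum_iff]
      constructor
      · have : Sum.inl ⁻¹' ({Sum.inl a} : Set (X₀ ⊕ X₁)) = {a} := by ext; simp
        rw [this]; exact hiso₀ a ha
      · have : Sum.inr ⁻¹' ({Sum.inl a} : Set (X₀ ⊕ X₁)) = ∅ := by ext; simp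
        rw [this]; exact isOpen_empty
    · have hb : b ≠ x₁ := by rintro rfl; exact hz key
      rw [isOpen_sum_iff]
      constructor
      · have : Sum.inl ⁻¹' ({Sum.inr b} : Set (X₀ ⊕ X₁)) = ∅ := by ext; simp
        rw [this]; exact isOpen_empty
      · have : Sum.inr ⁻¹' ({Sum.inr b} : Set (X₀ ⊕ X₁)) = {b} := by ext; simp
        rw [this]; exact hiso₁ b hb
  refine ⟨⟨h1, h2⟩, ?_⟩
  -- closedness of singletons {x₀}, {x₁}
  have hx₀c : IsClosed ({x₀} : Set X₀) := by
    rw [← isOpen_compl_iff, isOpen_iff_mem_nhds]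
    intro a ha
    exact mem_nhds_iff.mpr ⟨{a}, by simp only [Set.singleton_subset_iff, Set.mem_compl_iff]; exact ha, hiso₀ a ha, rfl⟩
  have hx₁c : IsClosed ({x₁} : Set X₁) := by
    rw [← isOpen_compl_iff, isOpen_iff_mem_nhds]
    intro b hb
    exact mem_nhds_iff.mpr ⟨{b}, by simp only [Set.singleton_subset_iff, Set.mem_compl_iff]; exact hb, hiso₁ b hb, rfl⟩
  -- images of closed sets under π ∘ inl / π ∘ inr are closed
  have closed_l : ∀ A : Set X₀, IsClosed A → IsClosed (π '' (Sum.inl '' A)) := by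
    intro A hA
    rw [← hq.isClosed_preimage]
    have hpre : π ⁻¹' (π '' (Sum.inl '' A)) =
        Sum.inl '' A ∪ {c | c = Sum.inr x₁ ∧ x₀ ∈ A} := by
      ext c
      simp only [Set.mem_preimage, Set.mem_image, Set.mem_union, Set.mem_setOf_eq,
        exists_exists_and_eq_and]
      constructor
      · rintro ⟨a, haA, hac⟩
        rw [hfib] at hac
        rcases hac with rfl | ⟨h1, h2⟩
        · exact Or.inl ⟨a, haA, rfl⟩
        · simp only [Set.mem_insert_iff, Set.mem_singleton_iff, Sum.inl.injEq,
            reduceCtorEq, or_false] at h1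
          rcases h2 with rfl | rfl
          · exact Or.inl ⟨a, haA, by rw [h1]⟩
          · exact Or.inr ⟨rfl, h1 ▸ haA⟩
      · rintro (⟨a, haA, rfl⟩ | ⟨rfl, hx⟩)
        · exact ⟨a, haA, rfl⟩
        · exact ⟨x₀, hx, key.symm⟩
    rw [hpre]
    have hinlA : IsClosed (Sum.inl '' A : Set (X₀ ⊕ X₁)) := by
      rw [isClosed_sum_iff]
      constructor
      · have : Sum.inl ⁻¹' (Sum.inl '' A : Set (X₀ ⊕ X₁)) = A :=
          Set.preimage_image_eq A Sum.inl_injective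
        rwa [this]
      · have : Sum.inr ⁻¹' (Sum.inl '' A : Set (X₀ ⊕ X₁)) = ∅ := by ext; simp
        rw [this]; exact isClosed_empty
    by_cases hx : x₀ ∈ A
    · have : {c : X₀ ⊕ X₁ | c = Sum.inr x₁ ∧ x₀ ∈ A} = {Sum.inr x₁} := by
        ext c; simp [hx]
      rw [this]
      refine hinlA.union ?_
      rw [isClosed_sum_iff]
      constructor
      · have : Sum.inl ⁻¹' ({Sum.inr x₁} : Set (X₀ ⊕ X₁)) = ∅ := by ext; simp
        rw [this]; exact isClosed_empty
      · have : Sum.inr ⁻¹' ({Sum.inr x₁} : Set (X₀ ⊕ X₁)) = {x₁} := by ext; simp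
        rw [this]; exact hx₁c
    · have : {c : X₀ ⊕ X₁ | c = Sum.inr x₁ ∧ x₀ ∈ A} = ∅ := by
        ext c; simp [hx]
      rw [this, Set.union_empty]
      exact hinlA
  have closed_r : ∀ B : Set X₁, IsClosed B → IsClosed (π '' (Sum.inr '' B)) := by
    intro B hB
    rw [← hq.isClosed_preimage]
    have hpre : π ⁻¹' (π '' (Sum.inr '' B)) =
        Sum.inr '' B ∪ {c | c = Sum.inl x₀ ∧ x₁ ∈ B} := by
      ext c
      simp only [Set.mem_preimage, Set.mem_image, Set.mem_union, Set.mem_setOf_eq,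
        exists_exists_and_eq_and]
      constructor
      · rintro ⟨b, hbB, hbc⟩
        rw [hfib] at hbc
        rcases hbc with rfl | ⟨h1, h2⟩
        · exact Or.inl ⟨b, hbB, rfl⟩
        · simp only [Set.mem_insert_iff, Set.mem_singleton_iff, Sum.inr.injEq,
            reduceCtorEq, false_or] at h1
          rcases h2 with rfl | rfl
          · exact Or.inr ⟨rfl, h1 ▸ hbB⟩
          · exact Or.inl ⟨b, hbB, by rw [h1]⟩
      · rintro (⟨b, hbB, rfl⟩ | ⟨rfl, hx⟩)
        · exact ⟨b, hbB, rfl⟩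
        · exact ⟨x₁, hx, key⟩
    rw [hpre]
    have hinrB : IsClosed (Sum.inr '' B : Set (X₀ ⊕ X₁)) := by
      rw [isClosed_sum_iff]
      constructor
      · have : Sum.inl ⁻¹' (Sum.inr '' B : Set (X₀ ⊕ X₁)) = ∅ := by ext; simp
        rw [this]; exact isClosed_empty
      · have : Sum.inr ⁻¹' (Sum.inr '' B : Set (X₀ ⊕ X₁)) = B :=
          Set.preimage_image_eq B Sum.inr_injective
        rwa [this]
    by_cases hx : x₁ ∈ B
    · have : {c : X₀ ⊕ X₁ | c = Sum.inl x₀ ∧ x₁ ∈ B} = {Sum.inl x₀} := by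
        ext c; simp [hx]
      rw [this]
      refine hinrB.union ?_
      rw [isClosed_sum_iff]
      constructor
      · have : Sum.inl ⁻¹' ({Sum.inl x₀} : Set (X₀ ⊕ X₁)) = {x₀} := by ext; simp
        rw [this]; exact hx₀c
      · have : Sum.inr ⁻¹' ({Sum.inl x₀} : Set (X₀ ⊕ X₁)) = ∅ := by ext; simp
        rw [this]; exact isClosed_empty
    · have : {c : X₀ ⊕ X₁ | c = Sum.inl x₀ ∧ x₁ ∈ B} = ∅ := by
        ext c; simp [hx]
      rw [this, Set.union_empty]
      exact hinrB
  set e : X₀ × X₁ → Z × Z := fun p => (π (Sum.inl p.1), π (Sum.inr p.2)) with he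
  refine ⟨e, Topology.IsClosedEmbedding.of_continuous_injective_isClosedMap ?_ ?_ ?_⟩
  · exact ((hq.continuous.comp continuous_inl).comp continuous_fst).prodMk
      ((hq.continuous.comp continuous_inr).comp continuous_snd)
  · rintro ⟨a, b⟩ ⟨a', b'⟩ hab
    simp only [he, Prod.mk.injEq] at hab
    obtain ⟨hl, hr⟩ := hab
    rw [fib_ll] at hl
    rw [fib_rr] at hr
    rw [hl, hr]
  · intro C hC
    rw [← isOpen_compl_iff, isOpen_iff_forall_mem_open]
    rintro ⟨z, w⟩ hzw
    simp only [Set.mem_compl_iff] at hzw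
    by_cases hz : ∃ a, π (Sum.inl a) = z
    swap
    · have hzne : z ≠ π (Sum.inl x₀) := by rintro rfl; exact hz ⟨x₀, rfl⟩
      refine ⟨{z} ×ˢ Set.univ, ?_, (h2 z hzne).prod isOpen_univ, by simp⟩
      rintro ⟨z', w'⟩ ⟨hz', -⟩
      simp only [Set.mem_singleton_iff] at hz'
      subst hz'
      rintro ⟨⟨a, b⟩, -, habe⟩
      exact hz ⟨a, congrArg Prod.fst habe⟩
    by_cases hw : ∃ b, π (Sum.inr b) = w
    swap
    · have hwne : w ≠ π (Sum.inl x₀) := by rintro rfl; exact hw ⟨x₁, key⟩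
      refine ⟨Set.univ ×ˢ {w}, ?_, isOpen_univ.prod (h2 w hwne), by simp⟩
      rintro ⟨z', w'⟩ ⟨-, hw'⟩
      simp only [Set.mem_singleton_iff] at hw'
      subst hw'
      rintro ⟨⟨a, b⟩, -, habe⟩
      exact hw ⟨b, congrArg Prod.snd habe⟩
    obtain ⟨a, rfl⟩ := hz
    obtain ⟨b, rfl⟩ := hw
    have habC : (a, b) ∉ C := fun h => hzw ⟨(a, b), h, rfl⟩
    obtain ⟨A, B, hA, hB, haA, hbB, hAB⟩ :=
      isOpen_prod_iff.mp hC.isOpen_compl a b habC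
    refine ⟨(π '' (Sum.inl '' Aᶜ))ᶜ ×ˢ (π '' (Sum.inr '' Bᶜ))ᶜ, ?_,
      ((closed_l _ hA.isClosed_compl).isOpen_compl).prod
        ((closed_r _ hB.isClosed_compl).isOpen_compl), ?_, ?_⟩
    · rintro ⟨z', w'⟩ ⟨hzU, hwV⟩
      rintro ⟨⟨a', b'⟩, habC', habe⟩
      have ha' : a' ∈ A := by
        by_contra h
        exact hzU ⟨Sum.inl a', ⟨a', h, rfl⟩, congrArg Prod.fst habe⟩
      have hb' : b' ∈ B := by
        by_contra h
        exact hwV ⟨Sum.inr b', ⟨b', h, rfl⟩, congrArg Prod.snd habe⟩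
      exact hAB ⟨ha', hb'⟩ habC'
    · rintro ⟨c, ⟨a', ha', rfl⟩, hac⟩
      rw [fib_ll] at hac
      rw [hac] at ha'
      exact ha' haA
    · rintro ⟨c, ⟨b', hb', rfl⟩, hbc⟩
      rw [fib_rr] at hbc
      rw [hbc] at hb'
      exact hb' hbB
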